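/- S_D equals the set of monomials of the form m′ + b, where b is a δ-monomial with deg b = r and b_δ = r−w, and m′ is a (δ+1)-monomial with 1 ≤ deg m′ ≤ s−r (the sum of exponent vectors corresponding to the product of monomials). -/

import Mathlib

open MvPolynomial
open scoped Classical

noncomputable section

/-- Total degree of an exponent vector `m : Fin n →₀ ℕ`. -/
def mdeg {n : ℕ} (m : Fin n →₀ ℕ) : ℕ := ∑ k, m k

/-- `m` is a δ-monomial: all exponents of variables strictly before `δ` vanish. -/
def IsDeltaMon {n : ℕ} (δ : Fin n) (m : Fin n →₀ ℕ) : Prop := ∀ k < δ, m k = 0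

/-- `m` is a (δ+1)-monomial: all exponents of variables up to and including `δ` vanish. -/
def IsSuccDeltaMon {n : ℕ} (δ : Fin n) (m : Fin n →₀ ℕ) : Prop := ∀ k ≤ δ, m k = 0

/-- The order ideal `O(n,r,s,δ,w)`. -/
def OIdeal {n : ℕ} (r s w : ℕ) (δ : Fin n) : Set (Fin n →₀ ℕ) :=
  {m | mdeg m < r ∨ (IsDeltaMon δ m ∧ r ≤ mdeg m ∧ mdeg m ≤ s ∧ m δ + w + 1 ≤ r)}

/-- The border `∂O`. -/
def Border {n : ℕ} (r s w : ℕ) (δ : Fin n) : Set (Fin n →₀ ℕ) :=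
  {m | m ∉ OIdeal r s w δ ∧
    ∃ (α : Fin n) (t : Fin n →₀ ℕ), t ∈ OIdeal r s w δ ∧ m = Finsupp.single α 1 + t}

/-- The set `S_D` of "diagonal" border monomials. -/
def SD {n : ℕ} (r s w : ℕ) (δ : Fin n) : Set (Fin n →₀ ℕ) :=
  {m | m ∈ Border r s w δ ∧ IsDeltaMon δ m ∧ r + 1 ≤ mdeg m ∧ mdeg m ≤ s}

/-- The set `S_L` of "leading" monomials. -/
def SL {n : ℕ} (r w : ℕ) (δ : Fin n) : Set (Fin n →₀ ℕ) :=
  {m | IsDeltaMon δ m ∧ mdeg m = r ∧ r - w ≤ m δ}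

/-- `tar = {m ∈ O : r ≤ deg m ≤ s}`. -/
def Tar {n : ℕ} (r s w : ℕ) (δ : Fin n) : Set (Fin n →₀ ℕ) :=
  {m | m ∈ OIdeal r s w δ ∧ r ≤ mdeg m ∧ mdeg m ≤ s}

/-- `tar' = {m ∈ tar : deg m ≤ s−1}`. -/
def Tar' {n : ℕ} (r s w : ℕ) (δ : Fin n) : Set (Fin n →₀ ℕ) :=
  {m | m ∈ Tar r s w δ ∧ mdeg m ≤ s - 1}

/-- `tar'' = {m ∈ tar' : m_{δ+1} ≥ w}` (`δ'` is the index of `x_{δ+1}`). -/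
def Tar'' {n : ℕ} (r s w : ℕ) (δ δ' : Fin n) : Set (Fin n →₀ ℕ) :=
  {m | m ∈ Tar' r s w δ ∧ w ≤ m δ'}

/-- `trailmon = {m ∈ O : deg m = s}`. -/
def Trail {n : ℕ} (r s w : ℕ) (δ : Fin n) : Set (Fin n →₀ ℕ) :=
  {m | m ∈ OIdeal r s w δ ∧ mdeg m = s}

/-- `leadmon = {m : deg m = r, m ∉ O}`. -/
def Lead {n : ℕ} (r s w : ℕ) (δ : Fin n) : Set (Fin n →₀ ℕ) :=
  {m | mdeg m = r ∧ m ∉ OIdeal r s w δ}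

/-- `Seg_a`: δ-monomials of degree `r` with `x_δ`-exponent `r − a`. -/
def SegA {n : ℕ} (r a : ℕ) (δ : Fin n) : Set (Fin n →₀ ℕ) :=
  {b | IsDeltaMon δ b ∧ mdeg b = r ∧ b δ = r - a}

/-- The monomial `x_δ^{r−a}·x_{δ+1}^{a}` (`δ'` is the index of `x_{δ+1}`). -/
def bstar {n : ℕ} (r a : ℕ) (δ δ' : Fin n) : Fin n →₀ ℕ :=
  Finsupp.single δ (r - a) + Finsupp.single δ' a

/-- Truncation: sum of homogeneous components of degree `0` through `s`. -/
def truncLE {n : ℕ} {R : Type*} [CommRing R] (s : ℕ) (P : MvPolynomial (Fin n) R) :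
    MvPolynomial (Fin n) R :=
  ∑ m ∈ P.support.filter (fun m => mdeg m ≤ s), monomial m (coeff m P)

/-- `optX R none = 1 = X₀`, `optX R (some a) = X a`. -/
def optX {n : ℕ} (R : Type*) [CommRing R] : Option (Fin n) → MvPolynomial (Fin n) R
  | none => 1
  | some a => X a

/-- `optE none = 0 = e₀`, `optE (some a) = e_a`. -/
def optE {n : ℕ} : Option (Fin n) → (Fin n →₀ ℕ)
  | none => 0
  | some a => Finsupp.single a 1

/-- The reduction operator determined by a target function `UpsD` on `S_D`. -/
def redFn {n : ℕ} {R : Type*} [CommRing R] (r s w : ℕ) (δ : Fin n)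
    (UpsD : (Fin n →₀ ℕ) → MvPolynomial (Fin n) R) (P : MvPolynomial (Fin n) R) :
    MvPolynomial (Fin n) R :=
  (∑ m ∈ P.support.filter (fun m => m ∈ Tar r s w δ), monomial m (coeff m P)) -
  ∑ m ∈ P.support.filter (fun m => m ∈ SD r s w δ), coeff m P • UpsD m

/-- The polynomial ring over `K` in the distinguished indeterminates `C_{(t,b)}`
and the modification indeterminates `θ_m`. -/
abbrev BigA (K : Type*) [Field K] {n : ℕ} (r s w : ℕ) (δ δ' : Fin n) : Type _ :=
  MvPolynomial ((↥(Trail r s w δ) × ↥(Lead r s w δ)) ⊕ ↥(Tar'' r s w δ δ')) K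

/-- The generic linear combination `N_b = Σ_t C_{(t,b)}·X^t` for `b ∈ leadmon`, `0` otherwise. -/
def NB (K : Type*) [Field K] {n : ℕ} (r s w : ℕ) (δ δ' : Fin n) (b : Fin n →₀ ℕ) :
    MvPolynomial (Fin n) (BigA K r s w δ δ') :=
  if hb : b ∈ Lead r s w δ then
    ∑ᶠ t : ↥(Trail r s w δ),
      monomial (t : Fin n →₀ ℕ)
        (MvPolynomial.X (Sum.inl (t, ⟨b, hb⟩)) : BigA K r s w δ δ')
  else 0

lemma mdeg_add {n : ℕ} (a b : Fin n →₀ ℕ) : mdeg (a + b) = mdeg a + mdeg b := by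
  simp [mdeg, Finset.sum_add_distrib]

lemma mdeg_single {n : ℕ} (k : Fin n) (v : ℕ) : mdeg (Finsupp.single k v) = v := by
  simp [mdeg, Finsupp.single_apply]

lemma exists_subfun {n : ℕ} (g : Fin n → ℕ) (w : ℕ) (h : w ≤ ∑ k, g k) :
    ∃ c : Fin n → ℕ, (∀ k, c k ≤ g k) ∧ ∑ k, c k = w := by
  induction w with
  | zero => exact ⟨fun _ => 0, fun k => Nat.zero_le _, by simp⟩
  | succ w ih =>
    obtain ⟨c, hc, hs⟩ := ih (by omega)
    have hex : ∃ k, c k < g k := by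
      by_contra hcon
      push_neg at hcon
      have : ∑ k, g k ≤ ∑ k, c k := Finset.sum_le_sum (fun k _ => hcon k)
      omega
    obtain ⟨k, hk⟩ := hex
    refine ⟨Function.update c k (c k + 1), fun j => ?_, ?_⟩
    · by_cases hj : j = k
      · subst hj; simp; omega
      · simp [Function.update_of_ne hj]; exact hc j
    · rw [Finset.sum_update_of_mem (Finset.mem_univ k)]
      have := Finset.add_sum_erase Finset.univ c (Finset.mem_univ k)
      simp only [Finset.sdiff_singleton_eq_erase] at *
      omega

/-- `S_D` equals the set of monomials `m′ + b` with `b` a δ-monomial of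
degree `r` with `b_δ = r−w`, and `m′` a (δ+1)-monomial with `1 ≤ deg m′ ≤ s−r`. -/
theorem statement1 (n r s w : ℕ) (δ : Fin n) (hn : 2 ≤ n) (hr : 2 ≤ r) (hrs : r < s)
    (hδ : (δ : ℕ) + 1 < n) (hw : w + 1 ≤ r) :
    SD r s w δ =
      {m : Fin n →₀ ℕ | ∃ b m' : Fin n →₀ ℕ,
        IsDeltaMon δ b ∧ mdeg b = r ∧ b δ = r - w ∧
        IsSuccDeltaMon δ m' ∧ 1 ≤ mdeg m' ∧ mdeg m' ≤ s - r ∧ m = m' + b} := by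
  ext m
  constructor
  · rintro ⟨⟨hnotO, α, t, htO, heq⟩, hdm, h1, h2⟩
    have hdegm : mdeg m = 1 + mdeg t := by rw [heq, mdeg_add, mdeg_single]
    have htO' : IsDeltaMon δ t ∧ r ≤ mdeg t ∧ mdeg t ≤ s ∧ t δ + w + 1 ≤ r := by
      rcases htO with h | h
      · omega
      · exact h
    obtain ⟨htd, htr, hts, htδ⟩ := htO'
    have hmδt : m δ ≤ t δ + 1 := by
      rw [heq]
      simp [Finsupp.single_apply]
      split <;> omega
    have hmδlow : r < m δ + w + 1 := by
      by_contra hcon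
      exact hnotO (Or.inr ⟨hdm, by omega, h2, by omega⟩)
    have hmδ : m δ + w = r := by omega
    -- split the part of m strictly above δ
    set g : Fin n → ℕ := fun k => if k ≤ δ then 0 else m k with hg
    have hsum : mdeg m = m δ + ∑ k, g k := by
      have : ∀ k ∈ Finset.univ, m k = (if k = δ then m δ else 0) + g k := by
        intro k _
        rcases lt_trichotomy k δ with hk | hk | hk
        · simp [hg, hdm k hk, hk.le, Fin.ne_of_lt hk]
        · subst hk; simp [hg]
        · simp [hg, Fin.ne_of_gt hk, not_le.mpr hk]
      rw [mdeg, Finset.sum_congr rfl this, Finset.sum_add_distrib]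
      simp
    have hwg : w + 1 ≤ ∑ k, g k := by omega
    obtain ⟨c, hc, hcs⟩ := exists_subfun g w (by omega)
    have hcle : ∀ k, k ≤ δ → c k = 0 := by
      intro k hk
      have := hc k
      simp [hg, hk] at this
      exact this
    refine ⟨Finsupp.single δ (r - w) + Finsupp.equivFunOnFinite.symm c,
      Finsupp.equivFunOnFinite.symm (fun k => g k - c k), ?_, ?_, ?_, ?_, ?_, ?_, ?_⟩
    · intro k hk
      simp [Finsupp.single_apply, (Fin.ne_of_lt hk).symm, hcle k hk.le]
    · rw [mdeg_add, mdeg_single]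
      have : mdeg (Finsupp.equivFunOnFinite.symm c) = w := by
        rw [mdeg]; simpa using hcs
      omega
    · simp [Finsupp.single_apply, hcle δ le_rfl]
    · intro k hk
      simp [hg, hk]
    · have hms : mdeg (Finsupp.equivFunOnFinite.symm (fun k => g k - c k)) =
          ∑ k, (g k - c k) := by simp [mdeg]
      have hsub : ∑ k, (g k - c k) + ∑ k, c k = ∑ k, g k := by
        rw [← Finset.sum_add_distrib]
        exact Finset.sum_congr rfl (fun k _ => by have := hc k; omega)
      omega
    · have hms : mdeg (Finsupp.equivFunOnFinite.symm (fun k => g k - c k)) =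
          ∑ k, (g k - c k) := by simp [mdeg]
      have hsub : ∑ k, (g k - c k) + ∑ k, c k = ∑ k, g k := by
        rw [← Finset.sum_add_distrib]
        exact Finset.sum_congr rfl (fun k _ => by have := hc k; omega)
      omega
    · ext k
      simp only [Finsupp.add_apply, Finsupp.equivFunOnFinite_symm_apply_apply,
        Finsupp.single_apply]
      rcases lt_trichotomy k δ with hk | hk | hk
      · simp [hg, hdm k hk, hk.le, (Fin.ne_of_lt hk).symm, hcle k hk.le]
      · subst hk
        simp [hg, hcle k le_rfl]
        omega
      · have h1 : ¬ (δ = k) := Fin.ne_of_lt hk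
        have h2 : ¬ (k ≤ δ) := not_le.mpr hk
        simp [hg, h1, h2]
        have := hc k
        simp [hg, h2] at this
        omega
  · rintro ⟨b, m', hbd, hbr, hbδ, hm'd, hm'1, hm'2, rfl⟩
    have hdm : IsDeltaMon δ (m' + b) := by
      intro k hk
      simp [hm'd k hk.le, hbd k hk]
    have hdeg : mdeg (m' + b) = mdeg m' + r := by rw [mdeg_add, hbr]
    have hδv : (m' + b) δ = r - w := by simp [hm'd δ le_rfl, hbδ]
    have hnotO : (m' + b) ∉ OIdeal r s w δ := by
      rintro (h | ⟨_, _, _, h⟩)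
      · omega
      · rw [hδv] at h; omega
    set t1 : Fin n →₀ ℕ := (m' + b) - Finsupp.single δ 1 with ht1
    have hteq : ∀ k, t1 k = (m' + b) k - Finsupp.single δ 1 k := by
      intro k; rw [ht1, Finsupp.tsub_apply]
    have hδ1 : 1 ≤ (m' + b) δ := by rw [hδv]; omega
    have hmeq : (m' + b) = Finsupp.single δ 1 + t1 := by
      ext k
      simp only [Finsupp.add_apply, hteq k, Finsupp.single_apply]
      by_cases hk : δ = k
      · subst hk
        simp [hm'd δ le_rfl, hbδ]
        omega
      · simp [hk]
    have hdegt : mdeg (m' + b) = 1 + mdeg t1 := by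
      conv_lhs => rw [hmeq]
      rw [mdeg_add, mdeg_single]
    have ht1O : t1 ∈ OIdeal r s w δ := by
      refine Or.inr ⟨?_, by omega, by omega, ?_⟩
      · intro k hk
        rw [hteq k, hdm k hk]
        simp
      · rw [hteq δ, hδv]
        simp
        omega
    exact ⟨⟨hnotO, δ, t1, ht1O, hmeq⟩, hdm, by omega, by omega⟩
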